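/- Let A be a Hopf algebra, B a left coideal subalgebra, and R a right ideal of B⁺ with Δ̄(R) ⊆ Ā ⊗ R. Then Γ(δ_R) is contained in the cotensor product A □_Ā (B⁺/R), i.e., for all a, b ∈ B, the element a b₍₁₎ ⊗ p(b₍₂₎⁺) satisfies the cotensor compatibility condition a b₍₁₎ ⊗ π(b₍₂₎) ⊗ p(b₍₃₎⁺) = a₍₁₎ b₍₁₎ ⊗ π(a₍₂₎ b₍₂₎) ⊗ p(b₍₃₎⁺). -/

import Mathlib

open TensorProduct

noncomputable section

variable (A : Type) [Ring A] [HopfAlgebra ℂ A] (B : Subalgebra ℂ A)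

/-- The counit of `A` restricted to `B`. -/
def epsB : ↥B →ₐ[ℂ] ℂ := (Bialgebra.counitAlgHom ℂ A).comp B.val

/-- `B⁺ = B ∩ ker ε`. -/
def Bplus : Submodule ℂ ↥B := LinearMap.ker (epsB A B).toLinearMap

/-- `b ↦ b⁺ = b − ε(b)1`. -/
def plusB : ↥B →ₗ[ℂ] ↥B :=
  LinearMap.id - (Algebra.linearMap ℂ ↥B).comp (epsB A B).toLinearMap

lemma plusB_mem (b : ↥B) : plusB A B b ∈ Bplus A B := by
  simp [plusB, Bplus, epsB, Algebra.algebraMap_eq_smul_one]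

/-- `b ↦ b⁺` viewed as a map into `B⁺`. -/
def plusBc : ↥B →ₗ[ℂ] ↥(Bplus A B) :=
  (plusB A B).codRestrict (Bplus A B) (plusB_mem A B)

/-- The right ideal `B⁺A` of `A`. -/
def BplusA : Submodule ℂ A :=
  Submodule.span ℂ {x : A | ∃ b : ↥B, epsB A B b = 0 ∧ ∃ a : A, x = (b : A) * a}

/-- `Δ̄ = (π ⊗ id)∘Δ`. -/
def DeltaBar : A →ₗ[ℂ] (A ⧸ BplusA A B) ⊗[ℂ] A :=
  (TensorProduct.map (BplusA A B).mkQ LinearMap.id) ∘ₗ Coalgebra.comul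

/-- `Ā ⊗ N` as a submodule of `Ā ⊗ A`. -/
def AbarOx (N : Submodule ℂ A) : Submodule ℂ ((A ⧸ BplusA A B) ⊗[ℂ] A) :=
  LinearMap.range (TensorProduct.map
    (LinearMap.id : (A ⧸ BplusA A B) →ₗ[ℂ] (A ⧸ BplusA A B)) N.subtype)

lemma list_sum_map_apply {α M N : Type*} [AddCommMonoid M] [Module ℂ M]
    [AddCommMonoid N] [Module ℂ N] (l : List α) (f : α → M →ₗ[ℂ] N) (x : M) :
    (l.map f).sum x = (l.map fun a => f a x).sum := by
  induction l with
  | nil => simp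
  | cons h t ih => simp [ih]

set_option maxHeartbeats 1600000 in
/-- Let `R` be a right ideal of `B⁺` with `Δ̄(R) ⊆ Ā ⊗ R`.
Then `Γ(δ_R) ⊆ A □_Ā (B⁺/R)`: for all `a, b ∈ B` the element
`a b₍₁₎ ⊗ p(b₍₂₎⁺)` satisfies the cotensor compatibility
`a b₍₁₎ ⊗ π(b₍₂₎) ⊗ p(b₍₃₎⁺) = a₍₁₎b₍₁₎ ⊗ π(a₍₂₎b₍₂₎) ⊗ p(b₍₃₎⁺)`.
(Sweedler sums are expressed through arbitrarily chosen finite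
representations of the coproducts.) -/
theorem cotensor_compatibility_of_Gamma_deltaR
    (comulB : ↥B →ₗ[ℂ] A ⊗[ℂ] ↥B)
    (hcomulB : ∀ b : ↥B,
      (TensorProduct.map LinearMap.id B.val.toLinearMap) (comulB b)
        = Coalgebra.comul (b : A))
    (R : Submodule ℂ ↥B) (hR1 : R ≤ Bplus A B)
    (hR2 : ∀ x ∈ R, ∀ b ∈ Bplus A B, x * b ∈ R)
    (hRΔ : ∀ x ∈ R.map B.val.toLinearMap,
      DeltaBar A B x ∈ AbarOx A B (R.map B.val.toLinearMap))
    (a b : ↥B)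
    -- a finite representation `Σ b₍₁₎ ⊗ b₍₂₎ ⊗ b₍₃₎` of the twofold coproduct:
    (Lb : List (A × A × ↥B))
    (hLb : (Lb.map fun t => t.1 ⊗ₜ[ℂ] (t.2.1 ⊗ₜ[ℂ] t.2.2)).sum
      = (TensorProduct.map (LinearMap.id : A →ₗ[ℂ] A) comulB) (comulB b))
    -- a finite representation `Σ a₍₁₎ ⊗ a₍₂₎` of `Δ(a)`:
    (La : List (A × ↥B))
    (hLa : (La.map fun s => s.1 ⊗ₜ[ℂ] s.2).sum = comulB a) :
    let Q := ↥(Bplus A B) ⧸ (R.comap (Bplus A B).subtype)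
    let pQ : ↥B →ₗ[ℂ] Q := (R.comap (Bplus A B).subtype).mkQ ∘ₗ plusBc A B
    let π : A →ₗ[ℂ] A ⧸ BplusA A B := (BplusA A B).mkQ
    (Lb.map fun t =>
      ((a : A) * t.1) ⊗ₜ[ℂ] (π t.2.1 ⊗ₜ[ℂ] pQ t.2.2)).sum
    = (La.map fun s =>
        (Lb.map fun t =>
          (s.1 * t.1) ⊗ₜ[ℂ] (π ((s.2 : A) * t.2.1) ⊗ₜ[ℂ] pQ t.2.2)).sum).sum := by
  intro Q pQ π
  -- key fact 1 : π (s₂ * t) = ε(s₂) • π t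
  have hπ : ∀ (s2 : ↥B) (t : A), π ((s2 : A) * t) = epsB A B s2 • π t := by
    intro s2 t
    have hmem : (s2 : A) * t - epsB A B s2 • t ∈ BplusA A B := by
      apply Submodule.subset_span
      refine ⟨s2 - epsB A B s2 • 1, by simp, t, ?_⟩
      push_cast
      noncomm_ring
    have : π ((s2 : A) * t) = π (epsB A B s2 • t) :=
      (Submodule.Quotient.eq _).mpr hmem
    rw [this, map_smul]
  -- the linear map Φ
  obtain ⟨Φ, hΦ⟩ : ∃ Φ : A →ₗ[ℂ] A ⊗[ℂ] ((A ⧸ BplusA A B) ⊗[ℂ] Q), ∀ x : A,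
      Φ x = (Lb.map fun t => (x * t.1) ⊗ₜ[ℂ] (π t.2.1 ⊗ₜ[ℂ] pQ t.2.2)).sum := by
    refine ⟨(Lb.map fun t =>
      ((TensorProduct.mk ℂ A ((A ⧸ BplusA A B) ⊗[ℂ] Q)).flip
        (π t.2.1 ⊗ₜ[ℂ] pQ t.2.2)) ∘ₗ LinearMap.mulRight ℂ t.1).sum, fun x => ?_⟩
    rw [list_sum_map_apply]
    rfl
  -- key fact 2 : Σ ε(a₍₂₎) • a₍₁₎ = a
  have hc : (La.map fun s => epsB A B s.2 • s.1).sum = (a : A) := by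
    have h1 : Coalgebra.comul (a : A)
        = (La.map fun s => s.1 ⊗ₜ[ℂ] (s.2 : A)).sum := by
      rw [← hcomulB, ← hLa, map_list_sum, List.map_map]
      rfl
    have h2 := Coalgebra.lTensor_counit_comul (R := ℂ) (a : A)
    rw [h1, map_list_sum, List.map_map] at h2
    have h3 := congrArg (TensorProduct.rid ℂ A) h2
    rw [map_list_sum, List.map_map] at h3
    simpa [epsB, Function.comp_def, LinearMap.lTensor_tmul, TensorProduct.rid_tmul] using h3
  -- rewrite each inner sum of the RHS
  have hinner : ∀ s : A × ↥B,
      (Lb.map fun t =>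
        (s.1 * t.1) ⊗ₜ[ℂ] (π ((s.2 : A) * t.2.1) ⊗ₜ[ℂ] pQ t.2.2)).sum
      = Φ (epsB A B s.2 • s.1) := by
    intro s
    rw [hΦ]
    refine congrArg List.sum (List.map_congr_left fun t _ => ?_)
    rw [hπ, ← TensorProduct.smul_tmul', TensorProduct.tmul_smul,
      TensorProduct.smul_tmul', ← smul_mul_assoc]
  calc (Lb.map fun t =>
      ((a : A) * t.1) ⊗ₜ[ℂ] (π t.2.1 ⊗ₜ[ℂ] pQ t.2.2)).sum
      = Φ (a : A) := (hΦ _).symm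
    _ = Φ ((La.map fun s => epsB A B s.2 • s.1).sum) := by rw [hc]
    _ = (La.map fun s => Φ (epsB A B s.2 • s.1)).sum := by
        rw [map_list_sum, List.map_map]; rfl
    _ = _ := congrArg List.sum (List.map_congr_left fun s _ => (hinner s).symm)

end
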